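/- Let G be a connected simple graph, C a cycle in G, v a vertex on C, {x, y} an edge of C, and w any vertex of G. Then dist(w,x) + dist(w,y) + 1 ≤ length(C) + 2·dist(w,v), where dist denotes shortest-path distance in G and length(C) is the number of edges of C. -/

import Mathlib

private lemma aux_edge_dist {V : Type*} {G : SimpleGraph V} (hG : G.Connected)
    {x y : V} : ∀ {u z : V} (p : G.Walk u z), s(x, y) ∈ p.edges →
    G.dist u x + G.dist z y + 1 ≤ p.length ∨ G.dist u y + G.dist z x + 1 ≤ p.length := by
  intro u z p
  induction p with
  | nil => simp
  | @cons u' b z' hadj p ih =>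
    intro hmem
    rw [SimpleGraph.Walk.edges_cons, List.mem_cons] at hmem
    rcases hmem with heq | hmem
    · rw [Sym2.eq_iff] at heq
      rcases heq with ⟨rfl, rfl⟩ | ⟨rfl, rfl⟩
      · left
        have h1 : G.dist x x = 0 := by simp
        have h2 : G.dist z' y ≤ p.length := by
          rw [G.dist_comm]; exact SimpleGraph.dist_le p
        simp only [SimpleGraph.Walk.length_cons, h1]
        omega
      · right
        have h1 : G.dist y y = 0 := by simp
        have h2 : G.dist z' x ≤ p.length := by
          rw [G.dist_comm]; exact SimpleGraph.dist_le p
        simp only [SimpleGraph.Walk.length_cons, h1]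
        omega
    · have hub : G.dist u' b ≤ 1 := by
        have := SimpleGraph.dist_le hadj.toWalk
        simpa using this
      have tx : G.dist u' x ≤ G.dist u' b + G.dist b x := hG.dist_triangle
      have ty : G.dist u' y ≤ G.dist u' b + G.dist b y := hG.dist_triangle
      rcases ih hmem with h | h
      · left; simp only [SimpleGraph.Walk.length_cons]; omega
      · right; simp only [SimpleGraph.Walk.length_cons]; omega

/-- In a connected graph, for a cycle `C` (based at `a`), a vertex `v` on `C`, an edge
`{x,y}` of `C`, and any vertex `w`, the recorded value `dist w x + dist w y + 1`
overestimates the length of `C` by at most `2 · dist w v`. -/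
theorem bfs_cycle_detection_overestimate
    {V : Type*} (G : SimpleGraph V) (hG : G.Connected)
    {a : V} (c : G.Walk a a) (hc : c.IsCycle)
    (v : V) (hv : v ∈ c.support)
    (x y : V) (he : s(x, y) ∈ c.edges) (w : V) :
    G.dist w x + G.dist w y + 1 ≤ c.length + 2 * G.dist w v := by
  classical
  have he' : s(x, y) ∈ (c.rotate v hv).edges := by
    rw [(c.rotate_edges v hv).mem_iff]; exact he
  have hlen : (c.rotate v hv).length = c.length := by
    rw [← SimpleGraph.Walk.length_edges, ← SimpleGraph.Walk.length_edges]
    exact (c.rotate_edges v hv).perm.length_eq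
  have key : G.dist v x + G.dist v y + 1 ≤ c.length := by
    rcases aux_edge_dist hG (c.rotate v hv) he' with h | h
    · omega
    · omega
  have tx : G.dist w x ≤ G.dist w v + G.dist v x := hG.dist_triangle
  have ty : G.dist w y ≤ G.dist w v + G.dist v y := hG.dist_triangle
  omega
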